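/- Let k, l ≥ 1 and let T ∈ U(k,l). If T is diagonalizable and every eigenvalue of T has modulus 1, then T has an eigenvector v with ⟨v,v⟩_{k,l} ≠ 0. -/

import Mathlib

open Matrix

noncomputable section

/-- The Hermitian form `⟨u,v⟩_{k,l} = −∑_{j<k} u_j conj(v_j) + ∑_{j≥k} u_j conj(v_j)`
of signature `(k,l)` on `ℂ^{k+l}` (indices `j < k` are the negative ones). -/
def hform (k l : ℕ) (u v : Fin (k + l) → ℂ) : ℂ :=
  ∑ j : Fin (k + l),
    if (j : ℕ) < k then -(u j * starRingEnd ℂ (v j)) else u j * starRingEnd ℂ (v j)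

section aux
variable {k l : ℕ}

lemma hform_eq (u v : Fin (k+l) → ℂ) :
    hform k l u v
      = ∑ j : Fin (k+l), (if (j:ℕ) < k then (-1:ℂ) else 1) * (u j * starRingEnd ℂ (v j)) := by
  unfold hform
  refine Finset.sum_congr rfl fun j _ => ?_
  split <;> ring

lemma hform_add_left (u u' v : Fin (k+l) → ℂ) :
    hform k l (u + u') v = hform k l u v + hform k l u' v := by
  simp only [hform_eq, Pi.add_apply, ← Finset.sum_add_distrib]
  refine Finset.sum_congr rfl fun j _ => ?_; ring

lemma hform_smul_left (c : ℂ) (u v : Fin (k+l) → ℂ) :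
    hform k l (c • u) v = c * hform k l u v := by
  simp only [hform_eq, Pi.smul_apply, smul_eq_mul, Finset.mul_sum]
  refine Finset.sum_congr rfl fun j _ => ?_; ring

lemma hform_smul_right (c : ℂ) (u v : Fin (k+l) → ℂ) :
    hform k l u (c • v) = starRingEnd ℂ c * hform k l u v := by
  simp only [hform_eq, Pi.smul_apply, smul_eq_mul, _root_.map_mul, Finset.mul_sum]
  refine Finset.sum_congr rfl fun j _ => ?_; ring

lemma hform_conj (u v : Fin (k+l) → ℂ) :
    hform k l v u = starRingEnd ℂ (hform k l u v) := by
  simp only [hform_eq, map_sum]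
  refine Finset.sum_congr rfl fun j _ => ?_
  split <;> simp <;> ring

lemma hform_zero_left (v : Fin (k+l) → ℂ) : hform k l 0 v = 0 := by
  simp [hform_eq]

lemma hform_sum_left {ι : Type*} (s : Finset ι) (f : ι → Fin (k+l) → ℂ) (v : Fin (k+l) → ℂ) :
    hform k l (∑ i ∈ s, f i) v = ∑ i ∈ s, hform k l (f i) v := by
  classical
  induction s using Finset.induction with
  | empty => simp [hform_zero_left]
  | insert _ _ h ih => simp_all [Finset.sum_insert h, hform_add_left]

lemma mulVec_eq_sum_cols (M : Matrix (Fin (k+l)) (Fin (k+l)) ℂ) (a : Fin (k+l) → ℂ) :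
    M.mulVec a = ∑ i, a i • (fun r => M r i) := by
  ext r
  simp [Matrix.mulVec, dotProduct, mul_comm]

lemma hform_mulVec_mulVec (M : Matrix (Fin (k+l)) (Fin (k+l)) ℂ) (a b : Fin (k+l) → ℂ)
    (h : ∀ i j, hform k l (fun r => M r i) (fun r => M r j) = 0) :
    hform k l (M.mulVec a) (M.mulVec b) = 0 := by
  rw [mulVec_eq_sum_cols M a, mulVec_eq_sum_cols M b, hform_sum_left]
  refine Finset.sum_eq_zero fun i _ => ?_
  rw [hform_smul_left, hform_conj, hform_sum_left]
  rw [Finset.sum_eq_zero fun j _ => by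
    rw [hform_smul_left, hform_conj, h i j]; simp]
  simp

end aux

section aux2
variable {k l : ℕ}

lemma hform_add_right (u v v' : Fin (k+l) → ℂ) :
    hform k l u (v + v') = hform k l u v + hform k l u v' := by
  simp only [hform_eq, Pi.add_apply, map_add, ← Finset.sum_add_distrib]
  refine Finset.sum_congr rfl fun j _ => ?_; ring

end aux2

/-- A matrix is diagonalizable if it is conjugate to a diagonal matrix. -/
def IsDiagonalizable {n : ℕ} (A : Matrix (Fin n) (Fin n) ℂ) : Prop :=
  ∃ (P : GL (Fin n) ℂ) (d : Fin n → ℂ),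
    (↑(P⁻¹) : Matrix (Fin n) (Fin n) ℂ) * A * (↑P : Matrix (Fin n) (Fin n) ℂ) =
      Matrix.diagonal d

/-- If `T ∈ U(k,l)` is diagonalizable and every eigenvalue of `T`
has modulus 1, then `T` has an eigenvector `v` with `⟨v,v⟩_{k,l} ≠ 0`. -/
theorem stmt12 (k l : ℕ) (hk : 1 ≤ k) (hl : 1 ≤ l) (T : GL (Fin (k + l)) ℂ)
    (hU : ∀ u v : Fin (k + l) → ℂ,
      hform k l ((T : Matrix (Fin (k + l)) (Fin (k + l)) ℂ).mulVec u)
        ((T : Matrix (Fin (k + l)) (Fin (k + l)) ℂ).mulVec v) = hform k l u v)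
    (hdiag : IsDiagonalizable (T : Matrix (Fin (k + l)) (Fin (k + l)) ℂ))
    (huni : ∀ μ ∈ spectrum ℂ (T : Matrix (Fin (k + l)) (Fin (k + l)) ℂ), ‖μ‖ = 1) :
    ∃ v : Fin (k + l) → ℂ, v ≠ 0 ∧
      (∃ μ : ℂ, (T : Matrix (Fin (k + l)) (Fin (k + l)) ℂ).mulVec v = μ • v) ∧
      hform k l v v ≠ 0 := by
  classical
  obtain ⟨P, d, hPd⟩ := hdiag
  set M : Matrix (Fin (k+l)) (Fin (k+l)) ℂ := (T : Matrix (Fin (k+l)) (Fin (k+l)) ℂ) with hM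
  -- M * P = P * diagonal d
  have hPinv : (P : Matrix (Fin (k+l)) (Fin (k+l)) ℂ) * (↑(P⁻¹) : Matrix _ _ ℂ) = 1 := P.mul_inv
  have hMP : M * (P : Matrix (Fin (k+l)) (Fin (k+l)) ℂ)
      = (P : Matrix (Fin (k+l)) (Fin (k+l)) ℂ) * Matrix.diagonal d := by
    calc M * (P : Matrix (Fin (k+l)) (Fin (k+l)) ℂ)
        = ((P : Matrix (Fin (k+l)) (Fin (k+l)) ℂ) * (↑(P⁻¹) : Matrix _ _ ℂ)) * M
            * (P : Matrix (Fin (k+l)) (Fin (k+l)) ℂ) := by rw [hPinv, one_mul]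
      _ = (P : Matrix (Fin (k+l)) (Fin (k+l)) ℂ)
            * ((↑(P⁻¹) : Matrix _ _ ℂ) * M * (P : Matrix (Fin (k+l)) (Fin (k+l)) ℂ)) := by
          simp only [mul_assoc]
      _ = (P : Matrix (Fin (k+l)) (Fin (k+l)) ℂ) * Matrix.diagonal d := by rw [hPd]
  -- columns of P
  set w : Fin (k+l) → Fin (k+l) → ℂ := fun i r => (P : Matrix (Fin (k+l)) (Fin (k+l)) ℂ) r i
    with hw
  have hwcol : ∀ i, w i = (P : Matrix (Fin (k+l)) (Fin (k+l)) ℂ).mulVec (Pi.single i 1) := by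
    intro i; ext r; simp [hw, Matrix.mulVec_single]
  have hinjP : Function.Injective
      ((P : Matrix (Fin (k+l)) (Fin (k+l)) ℂ).mulVec) :=
    (Matrix.mulVec_injective_iff_isUnit).2 ⟨P, rfl⟩
  have hwne : ∀ i, w i ≠ 0 := by
    intro i h0
    have : (Pi.single i 1 : Fin (k+l) → ℂ) = 0 := by
      apply hinjP
      rw [← hwcol i, h0]
      simp [Matrix.mulVec_zero]
    have := congrFun this i
    simp at this
  have heig : ∀ i, M.mulVec (w i) = d i • w i := by
    intro i
    rw [hwcol i, Matrix.mulVec_mulVec, hMP, ← Matrix.mulVec_mulVec,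
      Matrix.diagonal_mulVec_single]
    have : (Pi.single i (d i * 1) : Fin (k+l) → ℂ) = d i • (Pi.single i 1 : Fin (k+l) → ℂ) := by
      ext r; simp [Pi.single_apply]
    rw [this, Matrix.mulVec_smul, ← hwcol i]
  -- eigenvalues are in spectrum
  have hspec : ∀ i, d i ∈ spectrum ℂ M := by
    intro i
    rw [spectrum.mem_iff]
    intro hunit
    have hinj := (Matrix.mulVec_injective_iff_isUnit).2 hunit
    have h0 : (algebraMap ℂ (Matrix (Fin (k+l)) (Fin (k+l)) ℂ) (d i) - M).mulVec (w i) = 0 := by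
      rw [Matrix.sub_mulVec, heig i, Algebra.algebraMap_eq_smul_one, Matrix.smul_mulVec,
        Matrix.one_mulVec, sub_self]
    have heq : (algebraMap ℂ (Matrix (Fin (k+l)) (Fin (k+l)) ℂ) (d i) - M).mulVec (w i)
        = (algebraMap ℂ (Matrix (Fin (k+l)) (Fin (k+l)) ℂ) (d i) - M).mulVec 0 := by
      rw [h0, Matrix.mulVec_zero]
    exact hwne i (hinj heq)
  have hnorm : ∀ i, ‖d i‖ = 1 := fun i => huni (d i) (hspec i)
  -- by contradiction
  by_contra hcon
  have key : ∀ v : Fin (k+l) → ℂ, v ≠ 0 → (∃ μ : ℂ, M.mulVec v = μ • v) →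
      hform k l v v = 0 := by
    intro v hv he
    by_contra h0
    exact hcon ⟨v, hv, he, h0⟩
  have hww : ∀ i, hform k l (w i) (w i) = 0 := fun i => key (w i) (hwne i) ⟨d i, heig i⟩
  -- there exist i j with hform (w i) (w j) ≠ 0
  have hex : ∃ i j, hform k l (w i) (w j) ≠ 0 := by
    by_contra hall
    push_neg at hall
    set i0 : Fin (k+l) := ⟨0, by omega⟩ with hi0
    set e0 : Fin (k+l) → ℂ := Pi.single i0 1 with he0
    have he0ne : hform k l e0 e0 = -1 := by
      rw [hform_eq, Finset.sum_eq_single i0]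
      · rw [if_pos (show ((i0:ℕ)) < k from hk)]; simp [he0, hi0]
      · intro j _ hj; simp [he0, Pi.single_apply, hj]
      · simp
    have hrep : (P : Matrix (Fin (k+l)) (Fin (k+l)) ℂ).mulVec
        ((↑(P⁻¹) : Matrix (Fin (k+l)) (Fin (k+l)) ℂ).mulVec e0) = e0 := by
      rw [Matrix.mulVec_mulVec, hPinv, Matrix.one_mulVec]
    have := hform_mulVec_mulVec (P : Matrix (Fin (k+l)) (Fin (k+l)) ℂ)
      ((↑(P⁻¹) : Matrix (Fin (k+l)) (Fin (k+l)) ℂ).mulVec e0)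
      ((↑(P⁻¹) : Matrix (Fin (k+l)) (Fin (k+l)) ℂ).mulVec e0)
      (fun i j => hall i j)
    rw [hrep, he0ne] at this
    norm_num at this
  obtain ⟨i, j, ha⟩ := hex
  set a : ℂ := hform k l (w i) (w j) with haa
  -- d i * conj (d j) = 1
  have h1 : d i * starRingEnd ℂ (d j) * a = a := by
    have := hU (w i) (w j)
    rw [heig i, heig j, hform_smul_left, hform_smul_right] at this
    rw [← haa] at this
    linear_combination this
  have h2 : d i * starRingEnd ℂ (d j) = 1 := by
    have := mul_right_cancel₀ ha (by linear_combination h1 : d i * starRingEnd ℂ (d j) * a = 1 * a)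
    exact this
  have h3 : d j * starRingEnd ℂ (d j) = 1 := by
    rw [Complex.mul_conj']
    norm_num [hnorm j]
  have hdij : d i = d j := by
    have := congrArg (· * d j) h2
    simp only [one_mul] at this
    calc d i = d i * (starRingEnd ℂ (d j) * d j) := by
          rw [mul_comm (starRingEnd ℂ (d j)) (d j), h3, mul_one]
      _ = d j := by rw [← mul_assoc]; exact this
  -- choose c
  set c : ℂ := if a + starRingEnd ℂ a = 0 then Complex.I else 1 with hc
  set v : Fin (k+l) → ℂ := w i + c • w j with hv
  have hvform : hform k l v v = starRingEnd ℂ c * a + c * starRingEnd ℂ a := by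
    rw [hv, hform_add_left, hform_add_right, hform_add_right, hform_smul_left,
      hform_smul_left, hform_smul_right, hform_smul_right, hww i, hww j, ← haa,
      hform_conj (w i) (w j), ← haa]
    ring
  have hvform_ne : hform k l v v ≠ 0 := by
    rw [hvform, hc]
    split
    · rename_i h0
      have hconj : starRingEnd ℂ a = -a := by linear_combination h0
      rw [hconj]
      simp only [Complex.conj_I]
      intro hcontra
      apply ha
      have : (-2 * Complex.I) * a = 0 := by linear_combination hcontra
      rcases mul_eq_zero.1 this with h | h
      · exfalso; simpa [Complex.ext_iff] using h
      · exact h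
    · rename_i h0
      simpa using h0
  have hvne : v ≠ 0 := by
    intro h0
    apply ha
    have : hform k l v (w j) = 0 := by rw [h0, hform_zero_left]
    rw [hv, hform_add_left, hform_smul_left, hww j, ← haa] at this
    simp [haa] at this; exact this
  have hveig : M.mulVec v = d i • v := by
    rw [hv, Matrix.mulVec_add, Matrix.mulVec_smul, heig i, heig j, hdij, smul_add,
      smul_comm]
  exact hvform_ne (key v hvne ⟨d i, hveig⟩)
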